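/- arXiv:1001.1748 — 2 statements merged into one kernel-verified Lean document; each statement's English description precedes it below -/
import Mathlib

section
/- Let Ω be a Cantor group with a minimal translation T and identity element e. Then there exists f ∈ C(Ω,ℝ) such that hull(F(e)) is isomorphic to Ω as a topological group, where F(e) = (f(Tⁿ(e)))_{n∈ℤ}. (For instance f(ω) = dist(e, ω) for a metric on Ω compatible with its topology works.) -/
open BoundedContinuousFunction Filter

noncomputable def shiftk (k : ℤ) (d : ℤ →ᵇ ℝ) : ℤ →ᵇ ℝ :=
  d.compContinuous ⟨fun n => n + k, continuous_of_discreteTopology⟩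

noncomputable def orb (d : ℤ →ᵇ ℝ) : Set (ℤ →ᵇ ℝ) := Set.range (fun k : ℤ => shiftk k d)

noncomputable def hull (d : ℤ →ᵇ ℝ) : Set (ℤ →ᵇ ℝ) := closure (orb d)

def IsPeriodicPotential (p : ℤ →ᵇ ℝ) : Prop := (orb p).Finite

def IsLimitPeriodic (d : ℤ →ᵇ ℝ) : Prop :=
  d ∈ closure {p : ℤ →ᵇ ℝ | IsPeriodicPotential p}

noncomputable def shiftMem (d : ℤ →ᵇ ℝ) (k : ℤ) : ↥(hull d) :=
  ⟨shiftk k d, subset_closure ⟨k, rfl⟩⟩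

noncomputable def hullId (d : ℤ →ᵇ ℝ) : ↥(hull d) :=
  ⟨d, subset_closure ⟨0, by ext n; simp [shiftk]⟩⟩

noncomputable def freqModule (d : ℤ →ᵇ ℝ) : AddSubgroup ℝ :=
  AddSubgroup.closure {α : ℝ | ∃ L : ℂ, L ≠ 0 ∧
    Filter.Tendsto (fun n : ℕ => (1 / (2 * (n : ℂ))) *
      ∑ k ∈ Finset.Icc (-(n : ℤ)) (n : ℤ), (d k : ℂ) * Complex.exp (-(Complex.I) * k * α))
      Filter.atTop (nhds L)}

def IsFreqIntegerSet (d : ℤ →ᵇ ℝ) (S : Set ℕ) : Prop :=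
  (∀ n ∈ S, 0 < n) ∧
  freqModule d = AddSubgroup.closure ((fun n : ℕ => 2 * Real.pi / (n : ℝ)) '' S)

def CanonicalMul (d : ℤ →ᵇ ℝ) (m : ↥(hull d) → ↥(hull d) → ↥(hull d)) : Prop :=
  Continuous (fun p : ↥(hull d) × ↥(hull d) => m p.1 p.2) ∧
  ∀ k l : ℤ, m (shiftMem d k) (shiftMem d l) = shiftMem d (k + l)

def HullGroupIso (d e : ℤ →ᵇ ℝ) : Prop :=
  ∃ md me, CanonicalMul d md ∧ CanonicalMul e me ∧
    ∃ h : ↥(hull d) ≃ₜ ↥(hull e), ∀ x y, h (md x y) = me (h x) (h y)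
variable {Ω : Type*} [TopologicalSpace Ω] [CommGroup Ω] [IsTopologicalGroup Ω] [CompactSpace Ω]
  [TotallyDisconnectedSpace Ω]

/-- The translation `T(ω) = ω·a` is minimal: every `T`-orbit is dense. -/
def IsMinimalTranslation (a : Ω) : Prop :=
  ∀ ω : Ω, Dense (Set.range fun n : ℤ => ω * a ^ n)

/-- `Ω` has no isolated points. -/
def NoIsolatedPoints (Ω : Type*) [TopologicalSpace Ω] : Prop :=
  ∀ ω : Ω, Filter.NeBot (nhdsWithin ω {ω}ᶜ)

/-- `F(ω) = (f(Tⁿ(ω)))_{n ∈ ℤ}` where `T` is the translation by `a`. -/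
noncomputable def sample (f : C(Ω, ℝ)) (a ω : Ω) : ℤ →ᵇ ℝ :=
  (BoundedContinuousFunction.mkOfCompact f).compContinuous
    ⟨fun n : ℤ => ω * a ^ n, continuous_of_discreteTopology⟩

section Auxiliary

open Pointwise Topology

set_option linter.unusedSectionVars false

/-- Any open subgroup of a compact group with dense `zpowers a` equals the closure of
`zpowers (a ^ index)`. -/
lemma key_open_subgroup (a : Ω) (hd : Dense ((Subgroup.zpowers a : Subgroup Ω) : Set Ω))
    (H : OpenSubgroup Ω) :
    (H : Set Ω) = closure ((Subgroup.zpowers (a ^ H.toSubgroup.index) : Subgroup Ω) : Set Ω) := by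
  set m := H.toSubgroup.index with hm
  haveI : Finite (Ω ⧸ H.toSubgroup) := inferInstance
  have hm0 : m ≠ 0 := Subgroup.index_ne_zero_of_finite
  set W : Subgroup Ω := (Subgroup.zpowers (a ^ m)).topologicalClosure with hW
  have haH : a ^ m ∈ H.toSubgroup := Subgroup.pow_index_mem _ a
  have hWH : W ≤ H.toSubgroup :=
    Subgroup.topologicalClosure_minimal _ (Subgroup.zpowers_le.mpr haH) H.isClosed
  -- covering: Ω = ⋃ i : Fin m, a^i • W
  have hcover : (Set.univ : Set Ω) = ⋃ i : Fin m, (a ^ (i : ℕ)) • (W : Set Ω) := by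
    have hclosed : IsClosed (⋃ i : Fin m, (a ^ (i : ℕ)) • (W : Set Ω)) :=
      isClosed_iUnion_of_finite fun i =>
        (Subgroup.isClosed_topologicalClosure _).smul _
    have hsub : ((Subgroup.zpowers a : Subgroup Ω) : Set Ω) ⊆
        ⋃ i : Fin m, (a ^ (i : ℕ)) • (W : Set Ω) := by
      rintro x hx
      rw [Subgroup.coe_zpowers] at hx
      obtain ⟨n, rfl⟩ := hx
      have h1 : a ^ n = a ^ ((n % (m : ℤ)).toNat) * (a ^ m) ^ (n / (m : ℤ)) := by
        rw [← zpow_natCast a ((n % (m : ℤ)).toNat),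
          Int.toNat_of_nonneg (Int.emod_nonneg n (by exact_mod_cast hm0)),
          ← zpow_natCast a m, ← zpow_mul, ← zpow_add, Int.emod_add_mul_ediv n m]
      have hi : (n % (m : ℤ)).toNat < m := by
        rw [Int.toNat_lt' (Nat.pos_of_ne_zero hm0)]
        exact Int.emod_lt_of_pos n (by exact_mod_cast Nat.pos_of_ne_zero hm0)
      refine Set.mem_iUnion.mpr ⟨⟨_, hi⟩, ?_⟩
      refine ⟨(a ^ m) ^ (n / (m : ℤ)), ?_, ?_⟩
      · exact Subgroup.le_topologicalClosure _ (Subgroup.zpow_mem _ (Subgroup.mem_zpowers _) _)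
      · exact h1.symm
    have := closure_minimal hsub hclosed
    rw [hd.closure_eq] at this
    exact le_antisymm (by simpa using this) (Set.subset_univ _)
  -- surjection Fin m → Ω ⧸ W
  have hsurj : Function.Surjective (fun i : Fin m => (QuotientGroup.mk (a ^ (i : ℕ)) : Ω ⧸ W)) := by
    intro q
    induction q using QuotientGroup.induction_on with
    | H x =>
      have hx : x ∈ ⋃ i : Fin m, (a ^ (i : ℕ)) • (W : Set Ω) := hcover ▸ Set.mem_univ x
      obtain ⟨i, w, hw, hxw⟩ := Set.mem_iUnion.mp hx
      exact ⟨i, (QuotientGroup.eq ).mpr (by rw [← hxw]; simpa using hw)⟩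
  haveI : Finite (Ω ⧸ W) := Finite.of_surjective _ hsurj
  have hWind0 : W.index ≠ 0 := Subgroup.index_ne_zero_of_finite
  have hWle : W.index ≤ m := by
    have := Nat.card_le_card_of_surjective _ hsurj
    simpa [Subgroup.index] using this
  have hdvd : m ∣ W.index := Subgroup.index_dvd_of_le hWH
  have hWind : W.index = m := le_antisymm hWle (Nat.le_of_dvd (Nat.pos_of_ne_zero hWind0) hdvd)
  have hHW : H.toSubgroup ≤ W := by
    rw [← Subgroup.relIndex_eq_one]
    have h1 := Subgroup.relIndex_mul_index hWH
    rw [hWind, ← hm] at h1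
    exact Nat.eq_of_mul_eq_mul_right (Nat.pos_of_ne_zero hm0) (by rw [h1]; ring)
  have : H.toSubgroup = W := le_antisymm hHW hWH
  calc (H : Set Ω) = (W : Set Ω) := by rw [← this]; rfl
    _ = closure ((Subgroup.zpowers (a ^ m) : Subgroup Ω) : Set Ω) :=
      Subgroup.topologicalClosure_coe

lemma nhds_one_basis (a : Ω) (hd : Dense ((Subgroup.zpowers a : Subgroup Ω) : Set Ω)) :
    (𝓝 (1 : Ω)).HasBasis
      (fun m : ℕ => IsOpen (closure ((Subgroup.zpowers (a ^ m) : Subgroup Ω) : Set Ω)))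
      (fun m : ℕ => closure ((Subgroup.zpowers (a ^ m) : Subgroup Ω) : Set Ω)) := by
  rw [Filter.hasBasis_iff]
  intro S
  constructor
  · intro hS
    obtain ⟨U, hUS, hUopen, h1U⟩ := mem_nhds_iff.mp hS
    obtain ⟨V, hVclopen, h1V, hVU⟩ := compact_exists_isClopen_in_isOpen hUopen h1U
    obtain ⟨H, hHV⟩ := IsTopologicalGroup.exist_openSubgroup_sub_clopen_nhds_of_one hVclopen h1V
    refine ⟨H.toSubgroup.index, ?_, ?_⟩
    · rw [← key_open_subgroup a hd H]; exact H.isOpen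
    · rw [← key_open_subgroup a hd H]; exact fun x hx => hUS (hVU (hHV hx))
  · rintro ⟨m, hopen, hsub⟩
    exact mem_of_superset (hopen.mem_nhds (subset_closure (Subgroup.one_mem _))) hsub

lemma metrizable_of_minimal (a : Ω) (hd : Dense ((Subgroup.zpowers a : Subgroup Ω) : Set Ω)) :
    TopologicalSpace.MetrizableSpace Ω := by
  haveI : (𝓝 (1 : Ω)).IsCountablyGenerated := (nhds_one_basis a hd).isCountablyGenerated
  letI : UniformSpace Ω := IsTopologicalGroup.rightUniformSpace Ω
  haveI : (uniformity Ω).IsCountablyGenerated := by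
    rw [uniformity_eq_comap_nhds_one']
    exact Filter.comap.isCountablyGenerated _ _
  exact UniformSpace.metrizableSpace

lemma sample_apply (f : C(Ω, ℝ)) (a ω : Ω) (n : ℤ) : sample f a ω n = f (ω * a ^ n) := rfl

lemma shiftk_sample (f : C(Ω, ℝ)) (a ω : Ω) (k : ℤ) :
    shiftk k (sample f a ω) = sample f a (ω * a ^ k) := by
  ext n
  show f (ω * a ^ (n + k)) = f (ω * a ^ k * a ^ n)
  rw [zpow_add, mul_assoc, mul_comm (a ^ n), ← mul_assoc]

lemma unif_cont (f : C(Ω, ℝ)) {ε : ℝ} (hε : 0 < ε) :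
    ∃ U ∈ 𝓝 (1 : Ω), ∀ x y : Ω, y / x ∈ U → dist (f x) (f y) ≤ ε := by
  letI : UniformSpace Ω := IsTopologicalGroup.rightUniformSpace Ω
  haveI : IsUniformGroup Ω := isUniformGroup_of_commGroup
  have hf : UniformContinuous f := CompactSpace.uniformContinuous_of_continuous f.continuous
  have h2 : {p : ℝ × ℝ | dist p.1 p.2 < ε} ∈ uniformity ℝ := Metric.dist_mem_uniformity hε
  have h3 := hf h2
  rw [uniformity_eq_comap_nhds_one' Ω] at h3
  rw [Filter.mem_map, Filter.mem_comap] at h3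
  obtain ⟨U, hU, hsub⟩ := h3
  exact ⟨U, hU, fun x y hxy => le_of_lt (hsub (show ((x,y).2 * (x,y).1⁻¹) ∈ U from by simpa [div_eq_mul_inv] using hxy))⟩

lemma sample_continuous (f : C(Ω, ℝ)) (a : Ω) : Continuous (fun ω => sample f a ω) := by
  rw [continuous_iff_continuousAt]
  intro ω₀
  rw [ContinuousAt, Metric.tendsto_nhds]
  intro ε hε
  obtain ⟨U, hU, hUε⟩ := unif_cont f (half_pos hε)
  have hmem : {ω : Ω | ω / ω₀ ∈ U} ∈ 𝓝 ω₀ := by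
    rw [← nhds_translation_div ω₀]
    exact preimage_mem_comap hU
  filter_upwards [hmem] with ω hω
  have : dist (sample f a ω) (sample f a ω₀) ≤ ε / 2 := by
    rw [BoundedContinuousFunction.dist_le (le_of_lt (half_pos hε))]
    intro n
    rw [sample_apply, sample_apply, dist_comm]
    refine hUε _ _ ?_
    rwa [mul_div_mul_right_eq_div]
  linarith [this]

end Auxiliary

/-- For a Cantor group `Ω` with a minimal translation (by `a`) there exists
`f ∈ C(Ω,ℝ)` such that `hull (F(e))` (with its canonical group structure) is isomorphic to `Ω`
as a topological group, where `F(e) = (f(Tⁿ(e)))_{n∈ℤ}` and `e = 1`. -/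
theorem statement_11 {Ω : Type*} [TopologicalSpace Ω] [CommGroup Ω] [IsTopologicalGroup Ω]
    [CompactSpace Ω] [TotallyDisconnectedSpace Ω] (hni : NoIsolatedPoints Ω)
    (a : Ω) (hmin : IsMinimalTranslation a) :
    ∃ f : C(Ω, ℝ), ∃ m, CanonicalMul (sample f a 1) m ∧
      ∃ h : ↥(hull (sample f a 1)) ≃ₜ Ω, ∀ x y, h (m x y) = h x * h y := by
  have hd : Dense ((Subgroup.zpowers a : Subgroup Ω) : Set Ω) := by
    have h1 := hmin 1
    rw [Subgroup.coe_zpowers]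
    simpa [one_mul] using h1
  haveI := metrizable_of_minimal a hd
  letI : MetricSpace Ω := TopologicalSpace.metrizableSpaceMetric Ω
  set f : C(Ω, ℝ) := ⟨fun ω => dist (1 : Ω) ω, continuous_const.dist continuous_id⟩ with hf
  refine ⟨f, ?_⟩
  have hcont : Continuous (fun ω : Ω => sample f a ω) := sample_continuous f a
  -- injectivity
  have hinj : Function.Injective (fun ω : Ω => sample f a ω) := by
    intro ω ω' h
    have heq : ∀ n : ℤ, f (ω * a ^ n) = f (ω' * a ^ n) := fun n => by
      have h2 := congrArg (fun d : ℤ →ᵇ ℝ => d n) h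
      simpa [sample_apply] using h2
    have hEqOn : (fun x : Ω => f (ω * x)) = fun x : Ω => f (ω' * x) := by
      refine Continuous.ext_on hd ?_ ?_ ?_
      · exact f.continuous.comp (continuous_const.mul continuous_id)
      · exact f.continuous.comp (continuous_const.mul continuous_id)
      · rintro x hx
        rw [Subgroup.coe_zpowers] at hx
        obtain ⟨n, rfl⟩ := hx
        exact heq n
    have h0 := congrFun hEqOn ω⁻¹
    simp only [mul_inv_cancel] at h0
    have h1 : dist (1 : Ω) (1 : Ω) = dist (1 : Ω) (ω' * ω⁻¹) := h0
    rw [dist_self] at h1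
    have h2 : (1 : Ω) = ω' * ω⁻¹ := eq_of_dist_eq_zero h1.symm
    rw [← div_eq_mul_inv] at h2
    exact (div_eq_one.mp h2.symm).symm
  set d : ℤ →ᵇ ℝ := sample f a 1 with hdd
  -- hull d = range of sample
  have hrange_sub : hull d ⊆ Set.range (fun ω : Ω => sample f a ω) := by
    apply closure_minimal
    · rintro x ⟨k, rfl⟩
      exact ⟨1 * a ^ k, (shiftk_sample f a 1 k).symm⟩
    · exact (isCompact_range hcont).isClosed
  have hsub_range : Set.range (fun ω : Ω => sample f a ω) ⊆ hull d := by
    rintro x ⟨ω, rfl⟩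
    have hω : ω ∈ closure (Set.range fun n : ℤ => (1 : Ω) * a ^ n) := hmin 1 ω
    have himg : sample f a ω ∈ (fun ω : Ω => sample f a ω) '' closure
        (Set.range fun n : ℤ => (1 : Ω) * a ^ n) := ⟨ω, hω, rfl⟩
    have hsub2 : (fun ω : Ω => sample f a ω) '' (Set.range fun n : ℤ => (1 : Ω) * a ^ n)
        ⊆ orb d := by
      rintro y ⟨x, ⟨k, rfl⟩, rfl⟩
      exact ⟨k, by simpa using shiftk_sample f a 1 k⟩
    exact closure_mono hsub2 (image_closure_subset_closure_image hcont himg)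
  -- build the homeomorphism
  have hmem : ∀ ω : Ω, sample f a ω ∈ hull d := fun ω => hsub_range ⟨ω, rfl⟩
  have hbij : Function.Bijective (fun ω : Ω => (⟨sample f a ω, hmem ω⟩ : ↥(hull d))) := by
    constructor
    · intro ω ω' h
      exact hinj (congrArg Subtype.val h)
    · rintro ⟨x, hx⟩
      obtain ⟨ω, hω⟩ := hrange_sub hx
      exact ⟨ω, Subtype.ext hω⟩
  set E : Ω ≃ ↥(hull d) := Equiv.ofBijective _ hbij with hE
  have hEcont : Continuous E := hcont.subtype_mk _
  set homeo : Ω ≃ₜ ↥(hull d) := hEcont.homeoOfEquivCompactToT2 with hhomeo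
  have key : ∀ k : ℤ, homeo (a ^ k) = shiftMem d k := by
    intro k
    refine Subtype.ext ?_
    show sample f a (a ^ k) = shiftk k d
    rw [hdd, shiftk_sample f a 1 k, one_mul]
  refine ⟨fun x y => homeo (homeo.symm x * homeo.symm y), ⟨?_, ?_⟩, homeo.symm, ?_⟩
  · exact homeo.continuous.comp (((homeo.symm.continuous.comp continuous_fst)).mul
      ((homeo.symm.continuous.comp continuous_snd)))
  · intro k l
    show homeo (homeo.symm (shiftMem d k) * homeo.symm (shiftMem d l)) = shiftMem d (k + l)
    rw [← key k, ← key l, homeo.symm_apply_apply, homeo.symm_apply_apply, ← zpow_add, key]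
  · intro x y
    show homeo.symm (homeo (homeo.symm x * homeo.symm y)) = homeo.symm x * homeo.symm y
    rw [homeo.symm_apply_apply]
end

section
/- For any limit-periodic potential d ∈ ℓ∞(ℤ), the hull hull(d), with its canonical group structure, is a procyclic group. Equivalently, every Cantor group that admits a minimal translation is a procyclic group. -/
open BoundedContinuousFunction Filter

universe u

@[simp] lemma shiftk_apply (k : ℤ) (x : ℤ →ᵇ ℝ) (n : ℤ) : shiftk k x n = x (n + k) := rfl

lemma shiftk_shiftk (k l : ℤ) (x : ℤ →ᵇ ℝ) : shiftk k (shiftk l x) = shiftk (k + l) x := by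
  ext n; simp [shiftk, add_assoc]

@[simp] lemma shiftk_zero (x : ℤ →ᵇ ℝ) : shiftk 0 x = x := by ext n; simp

lemma dist_shiftk (k : ℤ) (x y : ℤ →ᵇ ℝ) : dist (shiftk k x) (shiftk k y) = dist x y := by
  apply le_antisymm
  · exact (dist_le dist_nonneg).2 fun n => by
      simpa using dist_coe_le_dist (f := x) (g := y) (n + k)
  · refine (dist_le dist_nonneg).2 fun n => ?_
    have := dist_coe_le_dist (f := shiftk k x) (g := shiftk k y) (n - k)
    simpa [sub_add_cancel] using this

lemma dist_shift_add (d : ℤ →ᵇ ℝ) (k l k' l' : ℤ) :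
    dist (shiftk (k + l) d) (shiftk (k' + l') d) ≤
      dist (shiftk k d) (shiftk k' d) + dist (shiftk l d) (shiftk l' d) := by
  have h1 : dist (shiftk (k + l) d) (shiftk (k' + l) d) = dist (shiftk k d) (shiftk k' d) := by
    rw [add_comm k l, add_comm k' l, ← shiftk_shiftk, ← shiftk_shiftk, dist_shiftk]
  have h2 : dist (shiftk (k' + l) d) (shiftk (k' + l') d) = dist (shiftk l d) (shiftk l' d) := by
    rw [← shiftk_shiftk, ← shiftk_shiftk, dist_shiftk]
  calc dist (shiftk (k + l) d) (shiftk (k' + l') d)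
      ≤ dist (shiftk (k + l) d) (shiftk (k' + l) d)
        + dist (shiftk (k' + l) d) (shiftk (k' + l') d) := dist_triangle _ _ _
    _ = _ := by rw [h1, h2]

lemma hull_isClosed (d : ℤ →ᵇ ℝ) : IsClosed (hull d) := isClosed_closure

lemma hull_compact {d : ℤ →ᵇ ℝ} (hd : IsLimitPeriodic d) : IsCompact (hull d) := by
  apply TotallyBounded.isCompact_of_isClosed _ (hull_isClosed d)
  apply TotallyBounded.closure
  rw [Metric.totallyBounded_iff]
  intro ε hε
  obtain ⟨p, hp, hdp⟩ := Metric.mem_closure_iff.1 hd (ε / 2) (by linarith)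
  refine ⟨orb p, hp, ?_⟩
  rintro x ⟨k, rfl⟩
  refine Set.mem_iUnion₂.2 ⟨shiftk k p, ⟨k, rfl⟩, ?_⟩
  simp only [Metric.mem_ball]
  rw [dist_shiftk]
  linarith [dist_comm d p ▸ hdp]

lemma denseRange_shiftMem (d : ℤ →ᵇ ℝ) : DenseRange (shiftMem d) := by
  intro x
  rw [Metric.mem_closure_iff]
  intro ε hε
  have hx : (x : ℤ →ᵇ ℝ) ∈ closure (orb d) := x.2
  obtain ⟨y, ⟨k, rfl⟩, hy⟩ := Metric.mem_closure_iff.1 hx ε hε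
  exact ⟨shiftMem d k, ⟨k, rfl⟩, by simpa [Subtype.dist_eq, shiftMem] using hy⟩

-- existence of a positive period for a periodic potential
lemma exists_period {p : ℤ →ᵇ ℝ} (hp : IsPeriodicPotential p) :
    ∃ N : ℤ, 0 < N ∧ shiftk N p = p := by
  have : ¬ Function.Injective (fun k : ℤ => shiftk k p) := by
    intro hinj
    exact Set.infinite_range_of_injective hinj hp
  simp only [Function.Injective, not_forall] at this
  obtain ⟨a, b, hab, hne⟩ := this
  have key : shiftk (a - b) p = p := by
    have : shiftk (-b) (shiftk a p) = shiftk (-b) (shiftk b p) := by rw [hab]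
    rwa [shiftk_shiftk, shiftk_shiftk, neg_add_cancel, shiftk_zero, add_comm, ← sub_eq_add_neg]
      at this
  rcases lt_trichotomy (a - b) 0 with h | h | h
  · refine ⟨b - a, by omega, ?_⟩
    have : shiftk (b - a) (shiftk (a - b) p) = shiftk (b - a) p := by rw [key]
    rw [shiftk_shiftk, show b - a + (a - b) = 0 by ring, shiftk_zero] at this; exact this.symm
  · exact absurd (by omega : a = b) hne
  · exact ⟨a - b, h, key⟩

lemma shiftk_mul_period {p : ℤ →ᵇ ℝ} {N : ℤ} (hN : shiftk N p = p) (k : ℤ) :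
    shiftk (k * N) p = p := by
  induction k using Int.induction_on with
  | zero => simp
  | succ k ih => rw [show ((k : ℤ) + 1) * N = N + k * N by ring, ← shiftk_shiftk, ih, hN]
  | pred k ih =>
      have : shiftk (-N) p = p := by
        have := congrArg (shiftk (-N)) hN
        rw [shiftk_shiftk, neg_add_cancel, shiftk_zero] at this; exact this.symm
      rw [show (-(k : ℤ) - 1) * N = -N + -(k : ℤ) * N by ring, ← shiftk_shiftk, ih, this]

section GroupStructure

variable (d : ℤ →ᵇ ℝ)

instance hullComplete : CompleteSpace ↥(hull d) := (hull_isClosed d).completeSpace_coe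

/-- the orbit inside the hull -/
noncomputable def hullO : Set ↥(hull d) := Set.range (shiftMem d)

lemma dense_hullO : Dense (hullO d) := denseRange_shiftMem d

variable {d}

noncomputable def pick (x : ↥(hullO d)) : ℤ := x.2.choose

lemma pick_spec (x : ↥(hullO d)) : shiftMem d (pick x) = x.1 := x.2.choose_spec

lemma shiftMem_dist (k l : ℤ) :
    dist (shiftMem d k) (shiftMem d l) = dist (shiftk k d) (shiftk l d) := rfl

lemma shiftMem_add_eq {a b k l : ℤ} (h1 : shiftMem d a = shiftMem d k)
    (h2 : shiftMem d b = shiftMem d l) : shiftMem d (a + b) = shiftMem d (k + l) := by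
  have e1 : shiftk a d = shiftk k d := congrArg Subtype.val h1
  have e2 : shiftk b d = shiftk l d := congrArg Subtype.val h2
  have := dist_shift_add d a b k l
  rw [e1, e2, dist_self, dist_self, add_zero] at this
  exact Subtype.ext (by
    have h0 : dist (shiftk (a + b) d) (shiftk (k + l) d) = 0 := le_antisymm this dist_nonneg
    exact eq_of_dist_eq_zero h0)

lemma shiftMem_neg_eq {a k : ℤ} (h1 : shiftMem d a = shiftMem d k) :
    shiftMem d (-a) = shiftMem d (-k) := by
  have e1 : shiftk a d = shiftk k d := congrArg Subtype.val h1
  have hd : dist (shiftk (-a) d) (shiftk (-k) d) = dist (shiftk k d) (shiftk a d) := by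
    have := dist_shiftk (a + k) (shiftk (-a) d) (shiftk (-k) d)
    rw [shiftk_shiftk, shiftk_shiftk, show a + k + -a = k by ring,
      show a + k + -k = a by ring] at this
    exact this.symm
  rw [e1, dist_self] at hd
  exact Subtype.ext (eq_of_dist_eq_zero hd)

variable (d)

noncomputable def e2 : ↥(hullO d) × ↥(hullO d) → ↥(hull d) × ↥(hull d) :=
  fun q => (q.1.1, q.2.1)

lemma e2_ui : IsUniformInducing (e2 d) :=
  IsUniformInducing.prod isUniformEmbedding_subtype_val.isUniformInducing
    isUniformEmbedding_subtype_val.isUniformInducing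

lemma val_dense : DenseRange (Subtype.val : ↥(hullO d) → ↥(hull d)) :=
  (dense_hullO d).denseRange_val

lemma val_ui : IsUniformInducing (Subtype.val : ↥(hullO d) → ↥(hull d)) :=
  isUniformEmbedding_subtype_val.isUniformInducing

lemma e2_dense : DenseRange (e2 d) := (val_dense d).prodMap (val_dense d)

noncomputable def g2 : ↥(hullO d) × ↥(hullO d) → ↥(hull d) :=
  fun q => shiftMem d (pick q.1 + pick q.2)

lemma g2_uc : UniformContinuous (g2 d) := by
  refine LipschitzWith.uniformContinuous (K := 2) (LipschitzWith.of_dist_le_mul fun q q' => ?_)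
  have key : dist (g2 d q) (g2 d q') ≤ dist q.1.1 q'.1.1 + dist q.2.1 q'.2.1 := by
    have h1 : dist (q.1.1 : ↥(hull d)) q'.1.1 = dist (shiftk (pick q.1) d) (shiftk (pick q'.1) d) := by
      rw [← pick_spec q.1, ← pick_spec q'.1]; rfl
    have h2 : dist (q.2.1 : ↥(hull d)) q'.2.1 = dist (shiftk (pick q.2) d) (shiftk (pick q'.2) d) := by
      rw [← pick_spec q.2, ← pick_spec q'.2]; rfl
    rw [h1, h2]
    exact dist_shift_add d _ _ _ _
  have hq : dist q.1.1 q'.1.1 ≤ dist q q' := by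
    rw [Prod.dist_eq]
    exact le_max_of_le_left (le_of_eq (Subtype.dist_eq q.1 q'.1))
  have hq2 : dist q.2.1 q'.2.1 ≤ dist q q' := by
    rw [Prod.dist_eq]
    exact le_max_of_le_right (le_of_eq (Subtype.dist_eq q.2 q'.2))
  calc dist (g2 d q) (g2 d q') ≤ dist q.1.1 q'.1.1 + dist q.2.1 q'.2.1 := key
    _ ≤ dist q q' + dist q q' := add_le_add hq hq2
    _ = 2 * dist q q' := by ring

noncomputable def mm : ↥(hull d) × ↥(hull d) → ↥(hull d) :=
  IsDenseInducing.extend ((e2_ui d).isDenseInducing (e2_dense d)) (g2 d)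

lemma mm_uc : UniformContinuous (mm d) :=
  uniformContinuous_uniformly_extend (e2_ui d) (e2_dense d) (g2_uc d)

lemma mm_shift (k l : ℤ) : mm d (shiftMem d k, shiftMem d l) = shiftMem d (k + l) := by
  exact (uniformly_extend_of_ind (e2_ui d) (e2_dense d) (g2_uc d)
      (⟨shiftMem d k, ⟨k, rfl⟩⟩, ⟨shiftMem d l, ⟨l, rfl⟩⟩)).trans
    (shiftMem_add_eq (pick_spec _) (pick_spec _))

noncomputable def g1 : ↥(hullO d) → ↥(hull d) := fun q => shiftMem d (-(pick q))

lemma g1_uc : UniformContinuous (g1 d) := by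
  refine LipschitzWith.uniformContinuous (K := 1) (LipschitzWith.of_dist_le_mul fun q q' => ?_)
  have hd : dist (g1 d q) (g1 d q') = dist (shiftk (pick q') d) (shiftk (pick q) d) := by
    have := dist_shiftk (pick q + pick q') (shiftk (-(pick q)) d) (shiftk (-(pick q')) d)
    rw [shiftk_shiftk, shiftk_shiftk, show pick q + pick q' + -(pick q) = pick q' by ring,
      show pick q + pick q' + -(pick q') = pick q by ring] at this
    exact this.symm
  rw [NNReal.coe_one, one_mul, hd, Subtype.dist_eq]
  rw [← pick_spec q, ← pick_spec q']
  exact le_of_eq (dist_comm _ _)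

noncomputable def ii : ↥(hull d) → ↥(hull d) :=
  IsDenseInducing.extend ((val_ui d).isDenseInducing (val_dense d)) (g1 d)

lemma ii_uc : UniformContinuous (ii d) :=
  uniformContinuous_uniformly_extend (val_ui d) (val_dense d) (g1_uc d)

lemma ii_shift (k : ℤ) : ii d (shiftMem d k) = shiftMem d (-k) :=
  (uniformly_extend_of_ind (val_ui d) (val_dense d) (g1_uc d)
      ⟨shiftMem d k, ⟨k, rfl⟩⟩).trans (shiftMem_neg_eq (pick_spec _))

end GroupStructure

section Laws

variable (d : ℤ →ᵇ ℝ)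

lemma mm_cont : Continuous fun p : ↥(hull d) × ↥(hull d) => mm d p := (mm_uc d).continuous

lemma ii_cont : Continuous (ii d) := (ii_uc d).continuous

lemma hullId_eq : hullId d = shiftMem d 0 := Subtype.ext (by simp [hullId, shiftMem])

lemma mm_comm (x y : ↥(hull d)) : mm d (x, y) = mm d (y, x) := by
  have h : (fun p : ↥(hull d) × ↥(hull d) => mm d p)
      = fun p : ↥(hull d) × ↥(hull d) => mm d (p.2, p.1) := by
    refine Continuous.ext_on ((dense_hullO d).prod (dense_hullO d)) (mm_cont d)
      ((mm_cont d).comp (continuous_snd.prodMk continuous_fst)) ?_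
    rintro ⟨x, y⟩ ⟨⟨k, rfl⟩, ⟨l, rfl⟩⟩
    simp only [mm_shift, add_comm]
  exact congrFun h (x, y)

lemma mm_id (x : ↥(hull d)) : mm d (hullId d, x) = x := by
  have h : (fun x : ↥(hull d) => mm d (hullId d, x)) = fun x => x := by
    refine Continuous.ext_on (dense_hullO d)
      ((mm_cont d).comp (continuous_const.prodMk continuous_id)) continuous_id ?_
    rintro x ⟨k, rfl⟩
    show mm d (hullId d, shiftMem d k) = shiftMem d k
    rw [hullId_eq, mm_shift, zero_add]
  exact congrFun h x

lemma mm_assoc (x y z : ↥(hull d)) : mm d (mm d (x, y), z) = mm d (x, mm d (y, z)) := by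
  have h : (fun q : ↥(hull d) × ↥(hull d) × ↥(hull d) => mm d (mm d (q.1, q.2.1), q.2.2))
      = fun q => mm d (q.1, mm d (q.2.1, q.2.2)) := by
    have c1 : Continuous fun q : ↥(hull d) × ↥(hull d) × ↥(hull d) =>
        mm d (mm d (q.1, q.2.1), q.2.2) :=
      (mm_cont d).comp (((mm_cont d).comp
        (continuous_fst.prodMk (continuous_fst.comp continuous_snd))).prodMk
        (continuous_snd.comp continuous_snd))
    have c2 : Continuous fun q : ↥(hull d) × ↥(hull d) × ↥(hull d) =>
        mm d (q.1, mm d (q.2.1, q.2.2)) :=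
      (mm_cont d).comp (continuous_fst.prodMk ((mm_cont d).comp
        ((continuous_fst.comp continuous_snd).prodMk (continuous_snd.comp continuous_snd))))
    refine Continuous.ext_on ((dense_hullO d).prod ((dense_hullO d).prod (dense_hullO d)))
      c1 c2 ?_
    rintro ⟨x, y, z⟩ ⟨⟨k, rfl⟩, ⟨l, rfl⟩, ⟨j, rfl⟩⟩
    simp only [mm_shift, add_assoc]
  exact congrFun h (x, y, z)

lemma mm_inv (x : ↥(hull d)) : mm d (ii d x, x) = hullId d := by
  have h : (fun x : ↥(hull d) => mm d (ii d x, x)) = fun _ => hullId d := by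
    refine Continuous.ext_on (dense_hullO d)
      ((mm_cont d).comp ((ii_cont d).prodMk continuous_id)) continuous_const ?_
    rintro x ⟨k, rfl⟩
    show mm d (ii d (shiftMem d k), shiftMem d k) = hullId d
    rw [ii_shift, mm_shift, neg_add_cancel, hullId_eq]
  exact congrFun h x

lemma mm_dist_right (x y y' : ↥(hull d)) :
    dist (mm d (x, y)) (mm d (x, y')) ≤ dist y y' := by
  set T : Set (↥(hull d) × ↥(hull d) × ↥(hull d)) :=
    {q | dist (mm d (q.1, q.2.1)) (mm d (q.1, q.2.2)) ≤ dist q.2.1 q.2.2} with hT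
  have hclosed : IsClosed T := by
    apply isClosed_le
    · exact (Continuous.dist
        ((mm_cont d).comp (continuous_fst.prodMk (continuous_fst.comp continuous_snd)))
        ((mm_cont d).comp (continuous_fst.prodMk (continuous_snd.comp continuous_snd))))
    · exact Continuous.dist (continuous_fst.comp continuous_snd)
        (continuous_snd.comp continuous_snd)
  have hsub : (Set.range (shiftMem d)) ×ˢ ((Set.range (shiftMem d)) ×ˢ (Set.range (shiftMem d)))
      ⊆ T := by
    rintro ⟨x, y, z⟩ ⟨⟨k, rfl⟩, ⟨l, rfl⟩, ⟨j, rfl⟩⟩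
    simp only [hT, Set.mem_setOf_eq, mm_shift]
    rw [shiftMem_dist, shiftMem_dist]
    rw [← shiftk_shiftk, ← shiftk_shiftk k j, dist_shiftk]
  have hdense : Dense ((Set.range (shiftMem d)) ×ˢ
      ((Set.range (shiftMem d)) ×ˢ (Set.range (shiftMem d)))) :=
    (dense_hullO d).prod ((dense_hullO d).prod (dense_hullO d))
  have : T = Set.univ := by
    apply Set.eq_univ_of_univ_subset
    rw [← hdense.closure_eq]
    exact closure_minimal hsub hclosed
  have := this ▸ Set.mem_univ (x, y, y')
  exact this

end Laws

section TD

variable {d : ℤ →ᵇ ℝ}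

-- coset transfer identity
lemma coset_key (d : ℤ →ᵇ ℝ) (a b h h' h₂ : ↥(hull d))
    (heq : mm d (a, h) = mm d (b, h')) :
    mm d (a, h₂) = mm d (b, mm d (h', mm d (ii d h, h₂))) := by
  calc mm d (a, h₂) = mm d (a, mm d (hullId d, h₂)) := by rw [mm_id]
    _ = mm d (a, mm d (mm d (ii d h, h), h₂)) := by rw [mm_inv]
    _ = mm d (a, mm d (mm d (h, ii d h), h₂)) := by rw [mm_comm d h (ii d h)]
    _ = mm d (a, mm d (h, mm d (ii d h, h₂))) := by rw [mm_assoc]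
    _ = mm d (mm d (a, h), mm d (ii d h, h₂)) := by rw [mm_assoc]
    _ = mm d (mm d (b, h'), mm d (ii d h, h₂)) := by rw [heq]
    _ = mm d (b, mm d (h', mm d (ii d h, h₂))) := by rw [mm_assoc]

lemma hull_tds (hd : IsLimitPeriodic d) : TotallyDisconnectedSpace ↥(hull d) := by
  classical
  haveI : CompactSpace ↥(hull d) := isCompact_iff_compactSpace.1 (hull_compact hd)
  rw [totallyDisconnectedSpace_iff]
  intro t _ ht x hx y hy
  by_contra hxy
  have hr : (0 : ℝ) < dist x y := dist_pos.2 hxy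
  set r := dist x y with hrdef
  -- periodic approximant
  obtain ⟨p, hp, hdp⟩ := Metric.mem_closure_iff.1 hd (r / 8) (by linarith)
  obtain ⟨N, hN, hNp⟩ := exists_period hp
  -- the subgroup H
  set A : Set ↥(hull d) := Set.range (fun k : ℤ => shiftMem d (k * N)) with hA
  set H : Set ↥(hull d) := closure A with hH
  have hHclosed : IsClosed H := isClosed_closure
  -- H is within r/4 of the identity
  have hHdist : ∀ h ∈ H, dist h (hullId d) ≤ r / 4 := by
    have hsub : A ⊆ {z : ↥(hull d) | dist z (hullId d) ≤ r / 4} := by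
      rintro z ⟨k, rfl⟩
      simp only [Set.mem_setOf_eq]
      have h1 : dist (shiftMem d (k * N)) (hullId d) = dist (shiftk (k * N) d) d := rfl
      rw [h1]
      have h2 : dist (shiftk (k * N) d) (shiftk (k * N) p) = dist d p := dist_shiftk _ _ _
      have h3 : shiftk (k * N) p = p := shiftk_mul_period hNp k
      calc dist (shiftk (k * N) d) d
          ≤ dist (shiftk (k * N) d) (shiftk (k * N) p) + dist (shiftk (k * N) p) d :=
            dist_triangle _ _ _
        _ = dist d p + dist p d := by rw [h2, h3]
        _ ≤ r / 8 + r / 8 := by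
            rw [dist_comm p d]
            exact add_le_add hdp.le hdp.le
        _ = r / 4 := by ring
    intro h hh
    exact closure_minimal hsub (isClosed_le (continuous_id.dist continuous_const)
      continuous_const) hh
  -- H is closed under mm
  have hHmul : ∀ a ∈ H, ∀ b ∈ H, mm d (a, b) ∈ H := by
    intro a ha b hb
    have h1 : (a, b) ∈ closure (A ×ˢ A) := by
      rw [closure_prod_eq]; exact ⟨ha, hb⟩
    have h2 : mm d (a, b) ∈ closure ((fun q : ↥(hull d) × ↥(hull d) => mm d q) '' (A ×ˢ A)) :=
      (image_closure_subset_closure_image (mm_cont d)) ⟨(a, b), h1, rfl⟩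
    refine closure_mono ?_ h2
    rintro z ⟨⟨u, v⟩, ⟨⟨k, rfl⟩, ⟨l, rfl⟩⟩, rfl⟩
    refine ⟨k + l, ?_⟩
    show shiftMem d ((k + l) * N) = mm d (shiftMem d (k * N), shiftMem d (l * N))
    rw [mm_shift, add_mul]
  -- H is closed under ii
  have hHinv : ∀ a ∈ H, ii d a ∈ H := by
    intro a ha
    have h2 : ii d a ∈ closure (ii d '' A) :=
      (image_closure_subset_closure_image (ii_cont d)) ⟨a, ha, rfl⟩
    refine closure_mono ?_ h2
    rintro z ⟨u, ⟨k, rfl⟩, rfl⟩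
    refine ⟨-k, ?_⟩
    show shiftMem d (-k * N) = ii d (shiftMem d (k * N))
    rw [ii_shift, neg_mul]
  have hHid : hullId d ∈ H := subset_closure ⟨0, by
    show shiftMem d (0 * N) = hullId d
    rw [zero_mul, hullId_eq]⟩
  -- cosets
  set C : ℕ → Set ↥(hull d) := fun j => (fun h => mm d (shiftMem d j, h)) '' H with hC
  have hCclosed : ∀ j, IsClosed (C j) := by
    intro j
    have : IsCompact (C j) :=
      (hHclosed.isCompact).image ((mm_cont d).comp (continuous_const.prodMk continuous_id))
    exact this.isClosed
  -- every shiftMem k is in some coset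
  have hmem : ∀ k : ℤ, shiftMem d k ∈ C (k % N).toNat := by
    intro k
    have h0 : (0 : ℤ) ≤ k % N := Int.emod_nonneg k (by omega)
    have h1 : ((k % N).toNat : ℤ) = k % N := Int.toNat_of_nonneg h0
    refine ⟨shiftMem d ((k / N) * N), subset_closure ⟨k / N, rfl⟩, ?_⟩
    show mm d (shiftMem d ((k % N).toNat : ℤ), shiftMem d (k / N * N)) = shiftMem d k
    rw [mm_shift, h1]
    congr 1
    exact Int.emod_add_ediv_mul k N
  -- the cosets cover
  have hcover : (⋃ j ∈ Finset.range N.toNat, C j) = Set.univ := by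
    apply Set.eq_univ_of_univ_subset
    rw [← (dense_hullO d).closure_eq]
    apply closure_minimal
    · rintro z ⟨k, rfl⟩
      have h0 : (0 : ℤ) ≤ k % N := Int.emod_nonneg k (by omega)
      have h2 : k % N < N := Int.emod_lt_of_pos k hN
      have hlt : (k % N).toNat ∈ Finset.range N.toNat := Finset.mem_range.2 (by omega)
      exact Set.mem_biUnion hlt (hmem k)
    · exact Set.Finite.isClosed_biUnion (Finset.range N.toNat).finite_toSet
        fun j _ => hCclosed j
  -- two cosets that intersect are equal
  have hdisj : ∀ i j : ℕ, (C i ∩ C j).Nonempty → C i = C j := by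
    intro i j ⟨z, ⟨h, hh, hz1⟩, ⟨h', hh', hz2⟩⟩
    have heq : mm d (shiftMem d i, h) = mm d (shiftMem d j, h') := hz1.trans hz2.symm
    ext c
    constructor
    · rintro ⟨h₂, hh₂, rfl⟩
      exact ⟨mm d (h', mm d (ii d h, h₂)), hHmul _ hh' _ (hHmul _ (hHinv _ hh) _ hh₂),
        (coset_key d _ _ _ _ _ heq).symm⟩
    · rintro ⟨h₂, hh₂, rfl⟩
      exact ⟨mm d (h, mm d (ii d h', h₂)), hHmul _ hh _ (hHmul _ (hHinv _ hh') _ hh₂),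
        (coset_key d _ _ _ _ _ heq.symm).symm⟩
  -- diameter of each coset
  have hdiam : ∀ j : ℕ, ∀ a ∈ C j, ∀ b ∈ C j, dist a b ≤ r / 2 := by
    rintro j a ⟨h1, hh1, rfl⟩ b ⟨h2, hh2, rfl⟩
    calc dist (mm d (shiftMem d j, h1)) (mm d (shiftMem d j, h2)) ≤ dist h1 h2 :=
          mm_dist_right d _ _ _
      _ ≤ dist h1 (hullId d) + dist (hullId d) h2 := dist_triangle _ _ _
      _ ≤ r / 4 + r / 4 := by
          rw [dist_comm (hullId d) h2]
          exact add_le_add (hHdist _ hh1) (hHdist _ hh2)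
      _ = r / 2 := by ring
  -- pick the coset containing x
  have hxmem : x ∈ ⋃ j ∈ Finset.range N.toNat, C j := hcover ▸ Set.mem_univ x
  obtain ⟨j₀, hj₀, hxC⟩ := Set.mem_iUnion₂.1 hxmem
  -- C j₀ is clopen
  have hopen : IsOpen (C j₀) := by
    have hcompl : (C j₀)ᶜ = ⋃ j ∈ (Finset.range N.toNat).filter (fun j => ¬ (C j = C j₀)), C j := by
      ext z
      simp only [Set.mem_compl_iff, Set.mem_iUnion, Finset.mem_filter, Finset.mem_range,
        exists_prop]
      constructor
      · intro hz
        have hzmem : z ∈ ⋃ j ∈ Finset.range N.toNat, C j := hcover ▸ Set.mem_univ z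
        obtain ⟨j, hj, hzC⟩ := Set.mem_iUnion₂.1 hzmem
        refine ⟨j, ⟨Finset.mem_range.1 hj, fun hCeq => hz (hCeq ▸ hzC)⟩, hzC⟩
      · rintro ⟨j, ⟨_, hne⟩, hzC⟩ hz
        exact hne (hdisj j j₀ ⟨z, hzC, hz⟩)
    rw [← isClosed_compl_iff, hcompl]
    exact Set.Finite.isClosed_biUnion (Set.Finite.ofFinset _ (fun _ => Iff.rfl))
      fun j _ => hCclosed j
  have hynot : y ∉ C j₀ := fun hyC => by
    have := hdiam j₀ x hxC y hyC
    rw [← hrdef] at this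
    linarith
  -- contradiction with preconnectedness
  obtain ⟨z, hzt, hzU, hzV⟩ := ht (C j₀) (C j₀)ᶜ hopen (hCclosed j₀).isOpen_compl
    (fun w _ => by by_cases h : w ∈ C j₀ <;> [exact Set.mem_union_left _ h;
      exact Set.mem_union_right _ h])
    ⟨x, hx, hxC⟩ ⟨y, hy, hynot⟩
  exact hzV hzU

end TD


/-- For any limit-periodic `d ∈ ℓ∞(ℤ)`, the hull `hull d` with its canonical
group structure is a procyclic group: it is profinite (compact and totally disconnected) and
carries a (commutative, topological) group structure with identity `d` in which the cyclic
subgroup generated by `σ(d)` (namely `{σᵏ(d) : k ∈ ℤ}`) is dense. Equivalently, every Cantor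
group admitting a minimal translation is procyclic, i.e. has a dense cyclic subgroup. -/
theorem statement_18 (d : ℤ →ᵇ ℝ) (hd : IsLimitPeriodic d) :
    (IsCompact (hull d) ∧ IsTotallyDisconnected (hull d) ∧
      ∃ m : ↥(hull d) → ↥(hull d) → ↥(hull d), ∃ inv : ↥(hull d) → ↥(hull d),
        CanonicalMul d m ∧ Continuous inv ∧
        (∀ x, m (hullId d) x = x) ∧
        (∀ x y z, m (m x y) z = m x (m y z)) ∧
        (∀ x, m (inv x) x = hullId d) ∧
        (∀ x y, m x y = m y x) ∧
        -- the cyclic subgroup generated by `σ(d)`, i.e. `{σᵏ(d)}`, is dense in the hull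
        Dense (Set.range fun k : ℤ => shiftMem d k)) ∧
    -- equivalently: every Cantor group with a minimal translation is procyclic
    (∀ (Ω : Type u) [TopologicalSpace Ω] [CommGroup Ω] [IsTopologicalGroup Ω]
        [CompactSpace Ω] [TotallyDisconnectedSpace Ω],
      (∀ ω : Ω, Filter.NeBot (nhdsWithin ω {ω}ᶜ)) →
      (∃ a : Ω, ∀ ω : Ω, Dense (Set.range fun n : ℤ => ω * a ^ n)) →
      ∃ g : Ω, Dense (Set.range fun n : ℤ => g ^ n)) := by
  constructor
  · refine ⟨hull_compact hd, totallyDisconnectedSpace_subtype_iff.1 (hull_tds hd),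
      fun x y => mm d (x, y), ii d, ⟨?_, fun k l => mm_shift d k l⟩, ii_cont d,
      mm_id d, fun x y z => mm_assoc d x y z, mm_inv d, fun x y => mm_comm d x y,
      dense_hullO d⟩
    exact mm_cont d
  · rintro Ω _ _ _ _ _ _ ⟨a, ha⟩
    exact ⟨a, by simpa using ha 1⟩
end
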